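/- Let X be an inner product module over a C*-algebra A, e ∈ X with ⟨e,e⟩ idempotent, and G_e(x,y) := ⟨x,y⟩ − ⟨x,e⟩⟨e,y⟩. Then for every a ∈ A and x ∈ X: G_e(x,x) ≤ ⟨x − ea, x − ea⟩. -/

import Mathlib

/-- If `⟨e,e⟩` is idempotent then `G_e(x,x) ≤ ⟨x - ea, x - ea⟩` for every `a ∈ A`. -/
theorem stmt2 {A X : Type*} [CStarAlgebra A] [PartialOrder A] [StarOrderedRing A]
    [AddCommGroup X]
    (inner : X → X → A) (smul : X → A → X)
    (h_add : ∀ x y z : X, inner x (y + z) = inner x y + inner x z)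
    (h_smul : ∀ (x y : X) (a : A), inner x (smul y a) = inner x y * a)
    (h_star : ∀ x y : X, star (inner x y) = inner y x)
    (h_pos : ∀ x : X, 0 ≤ inner x x)
    (h_nondeg : ∀ x : X, inner x x = 0 → x = 0)
    (e : X) (h_idem : inner e e * inner e e = inner e e) :
    ∀ (a : A) (x : X),
      inner x x - inner x e * inner e x ≤ inner (x - smul e a) (x - smul e a) := by
  intro a x
  set p := inner e e with hp
  have hps : star p = p := h_star e e
  have hsub : ∀ z y w : X, inner z (y - w) = inner z y - inner z w := by
    intro z y w
    have h := h_add z (y - w) w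
    rw [sub_add_cancel] at h
    exact eq_sub_of_add_eq h.symm
  have hsub' : ∀ z y w : X, inner (y - w) z = inner y z - inner w z := by
    intro z y w
    rw [← h_star z, hsub, star_sub, h_star, h_star]
  have hsmul' : ∀ (z y : X) (b : A), inner (smul y b) z = star b * inner y z := by
    intro z y b
    rw [← h_star z, h_smul, star_mul, h_star]
  -- e = smul e p
  have he : smul e p = e := by
    have hd : inner (e - smul e p) (e - smul e p) = 0 := by
      simp only [hsub, hsub', h_smul, hsmul', hps, ← hp, mul_assoc, h_idem]
      abel
    exact (sub_eq_zero.mp (h_nondeg _ hd)).symm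
  have hpb : p * inner e x = inner e x := by
    conv_rhs => rw [← he]
    rw [hsmul', hps]
  have hbp : inner x e * p = inner x e := by
    have h := congrArg star hpb
    rwa [star_mul, hps, h_star] at h
  have hexp : inner (x - smul e a) (x - smul e a)
      = inner x x - inner x e * a - star a * inner e x + star a * (p * a) := by
    rw [hsub, hsub', hsub', h_smul, h_smul, hsmul', hsmul', ← hp, mul_assoc]
    abel
  rw [← sub_nonneg, hexp]
  have key : (0 : A) ≤ star (inner e x - p * a) * (inner e x - p * a) :=
    star_mul_self_nonneg _
  have hc : star (inner e x - p * a) * (inner e x - p * a)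
      = inner x x - inner x e * a - star a * inner e x + star a * (p * a)
        - (inner x x - inner x e * inner e x) := by
    rw [star_sub, star_mul, hps, h_star]
    have h1 : (inner x e - star a * p) * (inner e x - p * a)
        = inner x e * inner e x - (inner x e * p) * a - star a * (p * inner e x)
          + star a * (p * (p * a)) := by noncomm_ring
    rw [h1, hbp, hpb, ← mul_assoc p p a, h_idem]
    abel
  rw [← hc]
  exact key
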